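/- For any graph G, the independence number α(G) is at most the annihilation number a(G). -/

import Mathlib

open Finset

namespace DSI

variable {V : Type*} (G : SimpleGraph V) [Fintype V] [DecidableEq V] [DecidableRel G.Adj]

/-- The degree sequence of `G`, sorted in non-decreasing order. -/
def dseq : List ℕ := (Finset.univ.val.map (fun v => G.degree v)).sort (· ≤ ·)

/-- The sum of the `k` smallest degrees, `Σ_{i=1}^k d_i`. -/
def sumSmallest (k : ℕ) : ℕ := ((dseq G).take k).sum

/-- The sum of the `k` largest degrees, `Σ_{i=1}^k d_{n-i+1}`. -/
def sumLargest (k : ℕ) : ℕ := ((dseq G).reverse.take k).sum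

/-- The number of edges `m(G)`. -/
def esize : ℕ := G.edgeFinset.card

/-- `m[S]`: the number of edges of the subgraph induced by `S`. -/
def mOn (S : Finset V) : ℕ := (S.sym2.filter (fun e => e ∈ G.edgeSet)).card

/-- A set `I` is `j`-independent if every vertex of `I` has fewer than `j` neighbours in `I`,
i.e. the induced subgraph has maximum degree `< j`. -/
def JIndep (j : ℕ) (I : Finset V) : Prop := ∀ v ∈ I, (I.filter (G.Adj v)).card < j

/-- The `j`-independence number `α_j(G)`. -/
noncomputable def alphaJ (j : ℕ) : ℕ := sSup {k | ∃ I : Finset V, JIndep G j I ∧ I.card = k}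

/-- The family `F` of maximum `j`-independent sets. -/
noncomputable def maxJIndep (j : ℕ) : Set (Finset V) :=
  {S | JIndep G j S ∧ S.card = alphaJ G j}

/-- `max_{S ∈ F} (m[V−S] − m[S])`. -/
noncomputable def fU (j : ℕ) : ℤ :=
  sSup ((fun S : Finset V => (mOn G Sᶜ : ℤ) - (mOn G S : ℤ)) '' maxJIndep G j)

/-- `min_{S ∈ F} (m[V−S] − m[S])`. -/
noncomputable def fL (j : ℕ) : ℤ :=
  sInf ((fun S : Finset V => (mOn G Sᶜ : ℤ) - (mOn G S : ℤ)) '' maxJIndep G j)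

/-- The upper `j`-annihilation number `a_j(G)`. -/
noncomputable def aJ (j : ℕ) : ℕ :=
  sSup {k | k ≤ Fintype.card V ∧ (sumSmallest G k : ℤ) + fU G j ≤ (esize G : ℤ)}

/-- The lower `j`-annihilation number `c_j(G)`. -/
noncomputable def cJ (j : ℕ) : ℕ :=
  sInf {k | k ≤ Fintype.card V ∧ (esize G : ℤ) ≤ (sumLargest G k : ℤ) + fL G j}

/-- The annihilation number `a(G)`. -/
noncomputable def annihilation : ℕ :=
  sSup {k | k ≤ Fintype.card V ∧ sumSmallest G k ≤ esize G}

/-- An independent set. -/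
def IndepSet (I : Finset V) : Prop := ∀ v ∈ I, ∀ w ∈ I, ¬ G.Adj v w

/-- The independence number `α(G)`. -/
noncomputable def alpha : ℕ := sSup {k | ∃ I : Finset V, IndepSet G I ∧ I.card = k}

lemma take_sum_cons' {a : ℕ} {l : List ℕ} (hl : (a :: l).Pairwise (· ≤ ·)) {k : ℕ}
    (hk : k ≤ l.length) : ((a :: l).take k).sum ≤ (l.take k).sum := by
  cases k with
  | zero => simp
  | succ j =>
    have hj : j < l.length := hk
    rw [List.take_succ_cons, List.sum_cons, List.sum_take_succ _ _ hj]
    have ha : a ≤ l[j] := (List.pairwise_cons.mp hl).1 _ (List.getElem_mem hj)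
    have : (l.take j).sum ≤ (l.take (j+1)).sum := by
      rw [List.sum_take_succ _ _ hj]; omega
    omega

lemma take_sum_le' {l l' : List ℕ} (h : List.Sublist l' l) (hl : l.Pairwise (· ≤ ·)) :
    (l.take l'.length).sum ≤ l'.sum := by
  induction h with
  | slnil => simp
  | cons a h ih =>
    exact le_trans (take_sum_cons' hl h.length_le) (ih (List.pairwise_cons.mp hl).2)
  | cons_cons a h ih =>
    simp only [List.length_cons, List.take_succ_cons, List.sum_cons]
    exact Nat.add_le_add_left (ih (List.pairwise_cons.mp hl).2) a

lemma sumSmallest_le_sum (I : Finset V) :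
    sumSmallest G I.card ≤ ∑ v ∈ I, G.degree v := by
  set t : Multiset ℕ := I.val.map (fun v => G.degree v) with ht
  set s : Multiset ℕ := Finset.univ.val.map (fun v => G.degree v) with hs
  have hts : t ≤ s := Multiset.map_le_map (by
    exact Finset.val_le_iff.mpr (Finset.subset_univ I))
  have hsub : List.Sublist (t.sort (· ≤ ·)) (s.sort (· ≤ ·)) := by
    apply List.sublist_of_subperm_of_pairwise _ (Multiset.pairwise_sort _ _)
      (Multiset.pairwise_sort _ _)
    rw [← Multiset.coe_le, Multiset.sort_eq, Multiset.sort_eq]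
    exact hts
  have hlen : (t.sort (· ≤ ·)).length = I.card := by
    rw [Multiset.length_sort, ht, Multiset.card_map]; rfl
  have hsum : (Multiset.sort t (· ≤ ·)).sum = t.sum := by
    rw [← Multiset.sum_coe, Multiset.sort_eq]
  have := take_sum_le' hsub (Multiset.pairwise_sort _ _)
  rw [hlen, hsum] at this
  calc sumSmallest G I.card = ((s.sort (· ≤ ·)).take I.card).sum := rfl
    _ ≤ t.sum := this
    _ = ∑ v ∈ I, G.degree v := rfl

lemma sum_degrees_le_esize {I : Finset V} (hI : IndepSet G I) :
    ∑ v ∈ I, G.degree v ≤ esize G := by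
  have : ∑ v ∈ I, G.degree v = (I.sigma fun v => G.neighborFinset v).card := by
    rw [Finset.card_sigma]
    rfl
  rw [this]
  apply Finset.card_le_card_of_injOn (fun p => s(p.1, p.2))
  · rintro ⟨v, w⟩ hp
    simp only [Finset.mem_coe, Finset.mem_sigma, SimpleGraph.mem_neighborFinset] at hp
    rw [Finset.mem_coe, SimpleGraph.mem_edgeFinset, SimpleGraph.mem_edgeSet]
    exact hp.2
  · rintro ⟨v, w⟩ hp ⟨v', w'⟩ hp' he
    simp only [Finset.coe_sigma, Set.mem_sigma_iff, Finset.mem_coe,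
      SimpleGraph.mem_neighborFinset] at hp hp'
    simp only [Sym2.eq, Sym2.rel_iff', Prod.mk.injEq, Prod.swap_prod_mk] at he
    rcases he with ⟨h1, h2⟩ | ⟨h1, h2⟩
    · simp [h1, h2]
    · exact absurd hp.2 (h2 ▸ hI v hp.1 v' hp'.1)

end DSI
theorem alpha_le_annihilation {V : Type*} (G : SimpleGraph V) [Fintype V]
    [DecidableEq V] [DecidableRel G.Adj] :
    DSI.alpha G ≤ DSI.annihilation G := by
  have hbdd : BddAbove {k | ∃ I : Finset V, DSI.IndepSet G I ∧ I.card = k} := by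
    refine ⟨Fintype.card V, ?_⟩
    rintro k ⟨I, _, rfl⟩
    exact Finset.card_le_univ I
  have hne : {k | ∃ I : Finset V, DSI.IndepSet G I ∧ I.card = k}.Nonempty :=
    ⟨0, ∅, fun v hv => absurd hv (Finset.notMem_empty v), Finset.card_empty⟩
  obtain ⟨I, hI, hcard⟩ := Nat.sSup_mem hne hbdd
  rw [DSI.alpha, ← hcard]
  apply le_csSup
  · exact ⟨Fintype.card V, fun k hk => hk.1⟩
  · exact ⟨Finset.card_le_univ I,
      le_trans (DSI.sumSmallest_le_sum G I) (DSI.sum_degrees_le_esize G hI)⟩
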